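/- Let S be a finite-dimensional commutative associative ℝ-algebra with identity. Then there exist finitely many proper ℝ-linear subspaces V₁, …, V_m of S such that an element x ∈ S is non-invertible if and only if x belongs to some V_j. In particular the set of non-invertible elements of S is a finite union of linear subspaces of positive codimension. -/

import Mathlib

/-- in a finite-dimensional commutative associative unital
ℝ-algebra, the set of non-invertible elements is a finite union of proper
ℝ-linear subspaces (hence of positive codimension). -/
theorem stmt1 (S : Type*) [CommRing S] [Algebra ℝ S] [FiniteDimensional ℝ S] :
    ∃ (m : ℕ) (V : Fin m → Submodule ℝ S),
      (∀ j, V j ≠ ⊤) ∧ (∀ x : S, ¬ IsUnit x ↔ ∃ j, x ∈ V j) := by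
  rcases subsingleton_or_nontrivial S with hS | hS
  · refine ⟨0, fun j => ⊥, fun j => j.elim0, fun x => ?_⟩
    refine ⟨fun h => absurd (isUnit_of_subsingleton x) h, ?_⟩
    rintro ⟨j, -⟩
    exact j.elim0
  · haveI : IsArtinianRing S := isArtinian_of_tower ℝ inferInstance
    classical
    have hF : {I : Ideal S | I.IsMaximal}.Finite := IsArtinianRing.setOfPred_isMaximal_finite S
    let t := hF.toFinset
    let e := t.equivFin
    refine ⟨t.card, fun j => ((e.symm j : Ideal S)).restrictScalars ℝ, ?_, ?_⟩
    · intro j h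
      have hmax : ((e.symm j : Ideal S)).IsMaximal := hF.mem_toFinset.mp (e.symm j).2
      have h' : ((e.symm j : Ideal S)).restrictScalars ℝ = ⊤ := h
      apply hmax.ne_top
      apply Ideal.eq_top_iff_one _ |>.2
      have h1 : (1 : S) ∈ ((e.symm j : Ideal S)).restrictScalars ℝ := by
        rw [h']; trivial
      exact h1
    · intro x
      constructor
      · intro hx
        obtain ⟨I, hI, hxI⟩ := exists_max_ideal_of_mem_nonunits hx
        have hIt : I ∈ t := by simpa [t, Set.Finite.mem_toFinset] using hI
        exact ⟨e ⟨I, hIt⟩, by simpa using hxI⟩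
      · rintro ⟨j, hj⟩ hu
        have hmax : ((e.symm j : Ideal S)).IsMaximal := hF.mem_toFinset.mp (e.symm j).2
        exact hmax.ne_top (Ideal.eq_top_of_isUnit_mem _ hj hu)
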